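/- Let p : ℝ⁺ → ℝ⁺ be continuous, positive, and convex with p strictly increasing, and let P(ρ) = ρ ∫_{ρ₀}^{ρ} p(r)/r² dr be the pressure potential. Then for all ρ₋ ≠ ρ₊ with ρ₋, ρ₊ > 0, the inequality p(ρ₋) + p(ρ₊) − 2(ρ₋ P(ρ₊) − ρ₊ P(ρ₋))/(ρ₊ − ρ₋) > 0 holds. -/

import Mathlib

/-- Key elementary inequality: `2ab log(b/a) < b² - a²` for `0 < a < b`. -/
lemma key_log_ineq (a b : ℝ) (ha : 0 < a) (hab : a < b) :
    2 * a * b * Real.log (b / a) < b ^ 2 - a ^ 2 := by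
  have hb : 0 < b := ha.trans hab
  have ht : (1 : ℝ) < b / a := (one_lt_div ha).2 hab
  have hu : 0 < Real.log (b / a) := Real.log_pos ht
  have hs : Real.log (b / a) < Real.sinh (Real.log (b / a)) :=
    Real.self_lt_sinh_iff.2 hu
  rw [Real.sinh_eq, Real.exp_log (by positivity), Real.exp_neg,
    Real.exp_log (by positivity)] at hs
  have h2 : (b / a - (b / a)⁻¹) / 2 = (b ^ 2 - a ^ 2) / (2 * a * b) := by
    field_simp
  rw [h2] at hs
  have := (lt_div_iff₀ (by positivity : (0:ℝ) < 2 * a * b)).1 hs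
  nlinarith [this]

/-- Main inequality for `a < b`. -/
lemma stmt5_aux (p : ℝ → ℝ) (ρ₀ : ℝ) (hρ₀ : 0 ≤ ρ₀)
    (hcont : ContinuousOn p (Set.Ioi 0))
    (hpos : ∀ ρ > (0 : ℝ), 0 < p ρ)
    (hconv : ConvexOn ℝ (Set.Ioi 0) p)
    (hmono : StrictMonoOn p (Set.Ioi 0))
    (P : ℝ → ℝ) (hP : ∀ ρ, P ρ = ρ * ∫ r in ρ₀..ρ, p r / r ^ 2)
    (a b : ℝ) (ha : 0 < a) (hab : a < b) :
    0 < p a + p b - 2 * (a * P b - b * P a) / (b - a) := by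
  have hb : 0 < b := ha.trans hab
  have hba : 0 < b - a := by linarith
  set f : ℝ → ℝ := fun r => p r / r ^ 2 with hf
  -- f is continuous on any compact subinterval of (0,∞)
  have hfc : ∀ c d : ℝ, 0 < min c d → IntervalIntegrable f MeasureTheory.volume c d := by
    intro c d hcd
    have hsub : Set.uIcc c d ⊆ Set.Ioi 0 := fun x hx => lt_of_lt_of_le hcd hx.1
    exact (ContinuousOn.div (hcont.mono hsub) (continuous_pow 2).continuousOn
      (fun x hx => pow_ne_zero 2 (ne_of_gt (hsub hx)))).intervalIntegrable
  set β : ℝ := (p b - p a) / (b - a) with hβ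
  set c : ℝ := p a - β * a with hc
  have hβpos : 0 < β := div_pos (sub_pos.2 (hmono ha hb hab)) hba
  -- the chord bound from convexity
  have hchord : ∀ x ∈ Set.Icc a b, p x ≤ c + β * x := by
    intro x hx
    obtain ⟨hax, hxb⟩ := hx
    set t : ℝ := (x - a) / (b - a) with htdef
    have ht0 : 0 ≤ t := div_nonneg (by linarith) (le_of_lt hba)
    have ht1 : t ≤ 1 := (div_le_one hba).2 (by linarith)
    have hxeq : (1 - t) • a + t • b = x := by
      simp only [smul_eq_mul, htdef]
      field_simp
      ring
    have := hconv.2 (Set.mem_Ioi.2 ha) (Set.mem_Ioi.2 hb) (by linarith : 0 ≤ 1 - t)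
      ht0 (by ring)
    rw [hxeq] at this
    have hrhs : (1 - t) • p a + t • p b = c + β * x := by
      simp only [smul_eq_mul, hc, hβ, htdef]
      field_simp
      ring
    linarith [hrhs ▸ this]
  -- the value of the comparison integral
  set g : ℝ → ℝ := fun x => c * x ^ (-2 : ℤ) + β * x⁻¹ with hg
  have hIg : IntervalIntegrable (fun x : ℝ => x ^ (-2 : ℤ)) MeasureTheory.volume a b := by
    apply ContinuousOn.intervalIntegrable
    apply ContinuousOn.zpow₀ continuousOn_id
    intro x hx
    exact Or.inl (ne_of_gt (lt_of_lt_of_le (lt_min ha hb) hx.1))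
  have hIinv : IntervalIntegrable (fun x : ℝ => x⁻¹) MeasureTheory.volume a b := by
    apply ContinuousOn.intervalIntegrable
    apply ContinuousOn.inv₀ continuousOn_id
    intro x hx
    exact ne_of_gt (lt_of_lt_of_le (lt_min ha hb) hx.1)
  have hIgint : IntervalIntegrable g MeasureTheory.volume a b :=
    (hIg.const_mul c).add (hIinv.const_mul β)
  have hgval : ∫ x in a..b, g x = c * (a⁻¹ - b⁻¹) + β * Real.log (b / a) := by
    rw [hg]
    rw [intervalIntegral.integral_add (hIg.const_mul c) (hIinv.const_mul β),
      intervalIntegral.integral_const_mul, intervalIntegral.integral_const_mul,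
      integral_zpow (Or.inr ⟨by norm_num, fun hx => absurd (lt_of_lt_of_le (lt_min ha hb) hx.1) (by norm_num)⟩),
      integral_inv_of_pos ha hb]
    norm_num
    constructor <;> ring
  -- comparison of integrals
  have hmain : ∫ x in a..b, f x ≤ c * (a⁻¹ - b⁻¹) + β * Real.log (b / a) := by
    rw [← hgval]
    apply intervalIntegral.integral_mono_on (le_of_lt hab) (hfc a b (lt_min ha hb)) hIgint
    intro x hx
    have hx0 : 0 < x := lt_of_lt_of_le ha hx.1
    have h2 : g x = (c + β * x) / x ^ 2 := by
      show c * x ^ (-2 : ℤ) + β * x⁻¹ = (c + β * x) / x ^ 2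
      rw [show (x : ℝ) ^ (-2 : ℤ) = (x ^ 2)⁻¹ by
        rw [zpow_neg, zpow_two, sq]]
      field_simp
    rw [h2]
    show p x / x ^ 2 ≤ (c + β * x) / x ^ 2
    exact (div_le_div_iff_of_pos_right (by positivity)).2 (hchord x hx)
  -- split on integrability from the base point
  have hββ : β * (b - a) = p b - p a := by
    rw [hβ]; field_simp
  have hpa : p a = c + β * a := by rw [hc]; ring
  have hpb : p b = c + β * b := by rw [hc]; linarith [hββ]
  have key := key_log_ineq a b ha hab
  clear_value β c
  by_cases hInt : IntervalIntegrable f MeasureTheory.volume ρ₀ a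
  · have hIab := hfc a b (lt_min ha hb)
    have hIb : IntervalIntegrable f MeasureTheory.volume ρ₀ b := hInt.trans hIab
    have hsubI : (∫ x in ρ₀..b, f x) - ∫ x in ρ₀..a, f x = ∫ x in a..b, f x :=
      intervalIntegral.integral_interval_sub_left hIb hInt
    rw [hP b, hP a]
    have hJ : a * (b * ∫ x in ρ₀..b, f x) - b * (a * ∫ x in ρ₀..a, f x)
        = a * b * ∫ x in a..b, f x := by rw [← hsubI]; ring
    rw [hJ, sub_pos, div_lt_iff₀ hba]
    set I : ℝ := ∫ x in a..b, f x with hI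
    clear_value I
    have e1 : 2 * a * b * (c * (a⁻¹ - b⁻¹) + β * Real.log (b / a))
        = 2 * c * (b - a) + β * (2 * a * b * Real.log (b / a)) := by
      field_simp
    have F1 : 2 * a * b * I ≤ 2 * c * (b - a) + β * (2 * a * b * Real.log (b / a)) := by
      rw [← e1]
      exact mul_le_mul_of_nonneg_left hmain (by positivity)
    have F2 : β * (2 * a * b * Real.log (b / a)) < β * (b ^ 2 - a ^ 2) :=
      mul_lt_mul_of_pos_left key hβpos
    have e2 : (p a + p b) * (b - a) = 2 * c * (b - a) + β * (b ^ 2 - a ^ 2) := by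
      rw [hpa, hpb]; ring
    rw [e2]
    linarith
  · have hle : ρ₀ ≤ a := by
      by_contra hlt
      push_neg at hlt
      exact hInt (hfc ρ₀ a (lt_min (by linarith) ha))
    have hnb : ¬ IntervalIntegrable f MeasureTheory.volume ρ₀ b := by
      intro hb'
      exact hInt (hb'.mono_set (Set.uIcc_subset_uIcc Set.left_mem_uIcc
        (Set.mem_uIcc.2 (Or.inl ⟨hle, le_of_lt hab⟩))))
    rw [hP b, hP a, intervalIntegral.integral_undef hInt, intervalIntegral.integral_undef hnb]
    have := hpos a ha
    have := hpos b hb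
    simp only [mul_zero, sub_zero, zero_div]
    norm_num
    linarith

theorem stmt5 (p : ℝ → ℝ) (ρ₀ : ℝ) (hρ₀ : 0 ≤ ρ₀)
    (hcont : ContinuousOn p (Set.Ioi 0))
    (hpos : ∀ ρ > (0 : ℝ), 0 < p ρ)
    (hconv : ConvexOn ℝ (Set.Ioi 0) p)
    (hmono : StrictMonoOn p (Set.Ioi 0))
    (P : ℝ → ℝ) (hP : ∀ ρ, P ρ = ρ * ∫ r in ρ₀..ρ, p r / r ^ 2) :
    ∀ ρm ρp : ℝ, 0 < ρm → 0 < ρp → ρm ≠ ρp →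
      0 < p ρm + p ρp - 2 * (ρm * P ρp - ρp * P ρm) / (ρp - ρm) := by
  intro ρm ρp hm hp hne
  rcases hne.lt_or_gt with h | h
  · exact stmt5_aux p ρ₀ hρ₀ hcont hpos hconv hmono P hP ρm ρp hm h
  · have key := stmt5_aux p ρ₀ hρ₀ hcont hpos hconv hmono P hP ρp ρm hp h
    have hne' : ρp - ρm ≠ 0 := by intro h0; exact (sub_ne_zero.2 (ne_of_gt h)).symm (by linarith)
    have heq : 2 * (ρp * P ρm - ρm * P ρp) / (ρm - ρp)
        = 2 * (ρm * P ρp - ρp * P ρm) / (ρp - ρm) := by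
      rw [← neg_div_neg_eq]
      ring_nf
    linarith [heq ▸ key]
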